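/- Let C be a triangulated category with a weight structure w and an adjacent t-structure t (C_{w≥0} = C_{t≥0}). Then C_{w∉[m,n]} ⊥ C[m,n]: for any L without weights m,...,n and any R ∈ C_{t≤n} ∩ C_{t≥m}, Hom(L, R) = 0. -/

import Mathlib

open CategoryTheory CategoryTheory.Limits CategoryTheory.Pretriangulated Opposite

universe v u

variable (C : Type u) [Category.{v} C] [Preadditive C] [HasZeroObject C]
  [HasShift C ℤ] [∀ n : ℤ, (shiftFunctor C n).Additive] [Pretriangulated C]

/-- A weight structure on the triangulated category `C`. -/
structure WeightStructure where
  /-- the class `C_{w ≤ n}` -/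
  le : ℤ → Set C
  /-- the class `C_{w ≥ n}` -/
  ge : ℤ → Set C
  le_iso_closed : ∀ (n : ℤ) (X Y : C), (X ≅ Y) → X ∈ le n → Y ∈ le n
  ge_iso_closed : ∀ (n : ℤ) (X Y : C), (X ≅ Y) → X ∈ ge n → Y ∈ ge n
  le_retract : ∀ (n : ℤ) (X Y : C) (a : X ⟶ Y) (b : Y ⟶ X),
    a ≫ b = 𝟙 X → Y ∈ le n → X ∈ le n
  ge_retract : ∀ (n : ℤ) (X Y : C) (a : X ⟶ Y) (b : Y ⟶ X),
    a ≫ b = 𝟙 X → Y ∈ ge n → X ∈ ge n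
  le_shift : ∀ (n k : ℤ) (X : C), X ∈ le n → X⟦k⟧ ∈ le (n + k)
  ge_shift : ∀ (n k : ℤ) (X : C), X ∈ ge n → X⟦k⟧ ∈ ge (n + k)
  le_mono : ∀ n : ℤ, le n ⊆ le (n + 1)
  ge_anti : ∀ n : ℤ, ge (n + 1) ⊆ ge n
  orth : ∀ (n : ℤ) (X Y : C), X ∈ le n → Y ∈ ge (n + 1) → ∀ f : X ⟶ Y, f = 0
  decomp : ∀ (X : C) (k : ℤ), ∃ (A B : C) (x : A ⟶ X) (y : X ⟶ B) (δ : B ⟶ A⟦(1 : ℤ)⟧),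
    (Triangle.mk x y δ ∈ distTriang C) ∧ A ∈ le k ∧ B ∈ ge (k + 1)

variable {C}

/-- `(A, B, x, y)` is a `k`-weight decomposition of `X`. -/
def WeightStructure.IsWeightDecomp (w : WeightStructure C) (k : ℤ) {X : C} (A B : C)
    (x : A ⟶ X) (y : X ⟶ B) : Prop :=
  (∃ δ : B ⟶ A⟦(1 : ℤ)⟧, Triangle.mk x y δ ∈ distTriang C) ∧ A ∈ w.le k ∧ B ∈ w.ge (k + 1)

/-- `g : M ⟶ N` kills weights `m, …, n`. -/
def WeightStructure.KillsWeights (w : WeightStructure C) (m n : ℤ) {M N : C}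
    (g : M ⟶ N) : Prop :=
  ∃ (A A' B B' : C) (x : A ⟶ M) (x' : M ⟶ A') (y' : B ⟶ N) (y : N ⟶ B'),
    w.IsWeightDecomp n A A' x x' ∧ w.IsWeightDecomp (m - 1) B B' y' y ∧
      x ≫ g ≫ y = 0

/-- The class of objects of `C` without weights `m, …, n`. -/
def WeightStructure.without (w : WeightStructure C) (m n : ℤ) : Set C :=
  {M : C | w.KillsWeights m n (𝟙 M)}


/-- A `t`-structure on the triangulated category `C` (cohomological conventions,
with `le n = C_{t ≤ n}` and `ge n = C_{t ≥ n}`). -/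
structure TStructure (C : Type u) [Category.{v} C] [Preadditive C] [HasZeroObject C]
    [HasShift C ℤ] [∀ n : ℤ, (shiftFunctor C n).Additive] [Pretriangulated C] where
  le : ℤ → Set C
  ge : ℤ → Set C
  le_iso_closed : ∀ (n : ℤ) (X Y : C), (X ≅ Y) → X ∈ le n → Y ∈ le n
  ge_iso_closed : ∀ (n : ℤ) (X Y : C), (X ≅ Y) → X ∈ ge n → Y ∈ ge n
  le_shift : ∀ (n k : ℤ) (X : C), X ∈ le n → X⟦k⟧ ∈ le (n + k)
  ge_shift : ∀ (n k : ℤ) (X : C), X ∈ ge n → X⟦k⟧ ∈ ge (n + k)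
  le_mono : ∀ n : ℤ, le n ⊆ le (n + 1)
  ge_anti : ∀ n : ℤ, ge (n + 1) ⊆ ge n
  orth : ∀ (n : ℤ) (X Y : C), X ∈ ge (n + 1) → Y ∈ le n → ∀ f : X ⟶ Y, f = 0
  decomp : ∀ (X : C) (n : ℤ), ∃ (A B : C) (x : A ⟶ X) (y : X ⟶ B) (δ : B ⟶ A⟦(1 : ℤ)⟧),
    (Triangle.mk x y δ ∈ distTriang C) ∧ A ∈ ge (n + 1) ∧ B ∈ le n


/-- For adjacent `w` and `t`, objects without weights `m, …, n` are
left-orthogonal to `C[m, n]`. -/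
theorem stmt19 (w : WeightStructure C) (t : TStructure C)
    (adj : w.ge 0 = t.ge 0) (m n : ℤ) (hmn : m ≤ n) (L R : C)
    (hL : L ∈ w.without m n) (hR : R ∈ t.le n ∩ t.ge m) (f : L ⟶ R) :
    f = 0 := by
  have adj' : ∀ (k : ℤ) (X : C), X ∈ w.ge k → X ∈ t.ge k := by
    intro k X hX
    have h1 : X⟦-k⟧ ∈ w.ge 0 := by
      have := w.ge_shift k (-k) X hX
      simpa using this
    rw [adj] at h1
    have h2 : X⟦-k⟧⟦k⟧ ∈ t.ge k := by
      have := t.ge_shift 0 k _ h1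
      simpa using this
    exact t.ge_iso_closed k _ _ ((shiftFunctorCompIsoId C (-k) k (by ring)).app X) h2
  obtain ⟨A, A', B, B', x, x', y', y, ⟨⟨δ₁, hT₁⟩, hA, hA'⟩, ⟨⟨δ₂, hT₂⟩, hB, hB'⟩, hxy⟩ := hL
  simp only [Category.id_comp] at hxy
  -- x factors through B since x ≫ y = 0
  obtain ⟨b, hb⟩ := Triangle.coyoneda_exact₂ _ hT₂ x hxy
  -- y' ≫ f : B ⟶ R is zero since B ∈ w.le (m-1), R ∈ t.ge m = w.ge... use w.orth via adjacency?
  -- Instead: A' ∈ w.ge (n+1) ⊆ t.ge (n+1), and t.orth kills A' ⟶ R.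
  have hxf : x ≫ f = 0 := by
    erw [hb, Category.assoc]
    -- y' ≫ f : B ⟶ R, B ∈ w.le (m-1). Need Hom(B, R) = 0.
    -- Decompose: R ∈ t.ge m. Use t-decomposition? Use w.orth: need R ∈ w.ge m.
    have hR' : R ∈ w.ge m := by
      have h1 : R⟦-m⟧ ∈ t.ge 0 := by
        have := t.ge_shift m (-m) R hR.2
        simpa using this
      rw [← adj] at h1
      have h2 : R⟦-m⟧⟦m⟧ ∈ w.ge m := by
        have := w.ge_shift 0 m _ h1
        simpa using this
      exact w.ge_iso_closed m _ _ ((shiftFunctorCompIsoId C (-m) m (by ring)).app R) h2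
    have := w.orth (m - 1) B R hB (by simpa using hR') (y' ≫ f)
    show b ≫ y' ≫ f = 0
    erw [this, comp_zero]
  obtain ⟨g, hg⟩ := Triangle.yoneda_exact₂ _ hT₁ f hxf
  have hA't : A' ∈ t.ge (n + 1) := adj' (n + 1) A' hA'
  rw [show f = x' ≫ g from hg, t.orth n A' R hA't hR.1 g, comp_zero]
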